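/- arXiv:1411.2348 — 4 statements merged into one kernel-verified Lean document; each statement's English description precedes it below -/
import Mathlib

section
/- For integers 1 ≤ k ≤ q-1, m ≥ 1, and 1 ≤ r ≤ n, the number T_{k,n}^(m)(r) of m-fold multisequences of length n over F_q whose nth joint nonlinear complexity of order k is at most r satisfies T_{k,n}^(m)(r) ≤ q^{(k+1)^r + m r}. -/
/-- A finite `m`-fold multisequence `Z` of length `n` over `F_q` satisfies a vector
recursion of order `c` by a polynomial of degree at most `k` in each variable,
applied componentwise. -/
def SatisfiesNLRecursionFin {Fq : Type*} [Field Fq] {m n : ℕ}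
    (Z : Fin n → Fin m → Fq) (k c : ℕ) : Prop :=
  ∃ f : MvPolynomial (Fin c) Fq,
    (∀ s : Fin c, MvPolynomial.degreeOf s f ≤ k) ∧
    ∀ j : Fin m, ∀ i : ℕ, ∀ h : i + c < n,
      Z ⟨i + c, h⟩ j =
        MvPolynomial.eval
          (fun s : Fin c => Z ⟨i + s, (Nat.add_lt_add_left s.2 i).trans h⟩ j) f

open MvPolynomial

/-- Rebuild a sequence from a polynomial recursion of order `r` and `r` initial values. -/
noncomputable def rebuildNL {Fq : Type*} [Field Fq] {m r : ℕ}
    (f : MvPolynomial (Fin r) Fq) (init : Fin r → Fin m → Fq) : ℕ → Fin m → Fq :=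
  fun i =>
    if h : i < r then init ⟨i, h⟩
    else fun j => MvPolynomial.eval
      (fun s : Fin r => rebuildNL f init (i - r + s) j) f
termination_by i => i
decreasing_by
  have := s.2
  omega

theorem rebuildNL_lt {Fq : Type*} [Field Fq] {m r : ℕ}
    (f : MvPolynomial (Fin r) Fq) (init : Fin r → Fin m → Fq) {i : ℕ} (h : i < r) :
    rebuildNL f init i = init ⟨i, h⟩ := by
  rw [rebuildNL]; simp [h]

theorem rebuildNL_ge {Fq : Type*} [Field Fq] {m r : ℕ}
    (f : MvPolynomial (Fin r) Fq) (init : Fin r → Fin m → Fq) {i : ℕ} (h : ¬ i < r) :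
    rebuildNL f init i = fun j => MvPolynomial.eval
      (fun s : Fin r => rebuildNL f init (i - r + s) j) f := by
  rw [rebuildNL]; simp [h]

/-- Any recursion of order `c ≤ r` yields one of order `r`. -/
theorem satisfies_shift {Fq : Type*} [Field Fq] {m n : ℕ}
    (Z : Fin n → Fin m → Fq) (k c r : ℕ) (hcr : c ≤ r)
    (h : SatisfiesNLRecursionFin Z k c) : SatisfiesNLRecursionFin Z k r := by
  obtain ⟨f, hdeg, hrec⟩ := h
  have hginj : Function.Injective (fun s : Fin c => (⟨r - c + s, by omega⟩ : Fin r)) := by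
    intro a b hab
    simp only [Fin.mk.injEq] at hab
    exact Fin.ext (by omega)
  refine ⟨rename (fun s : Fin c => (⟨r - c + s, by omega⟩ : Fin r)) f, ?_, ?_⟩
  · intro s
    by_cases hs : ∃ t : Fin c, (⟨r - c + t, by omega⟩ : Fin r) = s
    · obtain ⟨t, rfl⟩ := hs
      rw [MvPolynomial.degreeOf_rename_of_injective hginj]
      exact hdeg t
    · classical
      rw [MvPolynomial.degreeOf_eq_sup]
      apply Finset.sup_le
      intro d hd
      rw [MvPolynomial.support_rename_of_injective hginj, Finset.mem_image] at hd
      obtain ⟨d', _, rfl⟩ := hd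
      rw [Finsupp.mapDomain_notin_range _ _ (by rintro ⟨t, ht⟩; exact hs ⟨t, ht⟩)]
      exact Nat.zero_le k
  · intro j i hi
    rw [MvPolynomial.eval_rename]
    have hi' : (i + (r - c)) + c < n := by omega
    have hidx : (⟨i + r, hi⟩ : Fin n) = ⟨i + (r - c) + c, hi'⟩ := Fin.ext (by simp; omega)
    rw [hidx, hrec j (i + (r - c)) hi']
    refine congrArg (fun v => MvPolynomial.eval v f) (funext fun s => ?_)
    simp only [Function.comp_apply]
    congr 1
    exact Fin.ext (by simp; omega)

theorem rebuildNL_eq {Fq : Type*} [Field Fq] {m n r : ℕ} (hrn : r ≤ n)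
    (Z : Fin n → Fin m → Fq) (f : MvPolynomial (Fin r) Fq)
    (hrec : ∀ j : Fin m, ∀ i : ℕ, ∀ h : i + r < n,
      Z ⟨i + r, h⟩ j =
        MvPolynomial.eval
          (fun s : Fin r => Z ⟨i + s, (Nat.add_lt_add_left s.2 i).trans h⟩ j) f)
    (i : ℕ) (hi : i < n) :
    rebuildNL f (fun s => Z ⟨s, lt_of_lt_of_le s.2 hrn⟩) i = Z ⟨i, hi⟩ := by
  induction i using Nat.strong_induction_on with
  | _ i ih =>
    by_cases h : i < r
    · rw [rebuildNL_lt _ _ h]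
    · rw [rebuildNL_ge _ _ h]
      push_neg at h
      have hi' : (i - r) + r < n := by omega
      funext j
      have := hrec j (i - r) hi'
      have hZ : (⟨i, hi⟩ : Fin n) = ⟨(i - r) + r, hi'⟩ := Fin.ext (by simp; omega)
      rw [hZ, this]
      have harg : (fun s : Fin r => rebuildNL f (fun s => Z ⟨s, lt_of_lt_of_le s.2 hrn⟩) (i - r + s) j)
          = fun s : Fin r => Z ⟨i - r + s, (Nat.add_lt_add_left s.2 _).trans hi'⟩ j := by
        funext s
        rw [ih (i - r + s) (by have := s.2; omega) ((Nat.add_lt_add_left s.2 _).trans hi')]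
      rw [harg]

noncomputable def embNL (k r : ℕ) (e : Fin r → Fin (k + 1)) : Fin r →₀ ℕ :=
  Finsupp.equivFunOnFinite.symm (fun s => (e s : ℕ))

theorem embNL_apply (k r : ℕ) (e : Fin r → Fin (k + 1)) (s : Fin r) :
    embNL k r e s = e s := rfl

theorem embNL_injective (k r : ℕ) : Function.Injective (embNL k r) := by
  intro a b hab
  funext s
  have : (a s : ℕ) = b s := by
    have := congrArg (fun d : Fin r →₀ ℕ => d s) hab
    simpa [embNL_apply] using this
  exact Fin.ext this

noncomputable def polyOfNL {Fq : Type*} [Field Fq] (k r : ℕ)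
    (a : (Fin r → Fin (k + 1)) → Fq) : MvPolynomial (Fin r) Fq :=
  ∑ e : Fin r → Fin (k + 1), MvPolynomial.monomial (embNL k r e) (a e)

theorem polyOfNL_coeff {Fq : Type*} [Field Fq] (k r : ℕ)
    (f : MvPolynomial (Fin r) Fq) (hf : ∀ s, MvPolynomial.degreeOf s f ≤ k) :
    polyOfNL k r (fun e => MvPolynomial.coeff (embNL k r e) f) = f := by
  classical
  apply MvPolynomial.ext
  intro d
  rw [polyOfNL, MvPolynomial.coeff_sum]
  simp only [MvPolynomial.coeff_monomial]
  by_cases hd : ∀ s : Fin r, d s ≤ k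
  · set e₀ : Fin r → Fin (k + 1) := fun s => ⟨d s, Nat.lt_succ_of_le (hd s)⟩ with he₀
    have hemb : embNL k r e₀ = d := by
      apply Finsupp.ext
      intro s
      simp [embNL_apply, he₀]
    rw [Finset.sum_eq_single e₀]
    · simp [hemb]
    · intro e _ hne
      rw [if_neg]
      intro hc
      exact hne (embNL_injective k r (hc.trans hemb.symm))
    · intro hmem
      exact absurd (Finset.mem_univ e₀) hmem
  · push_neg at hd
    obtain ⟨s, hs⟩ := hd
    have hzero : MvPolynomial.coeff d f = 0 := by
      rw [← MvPolynomial.notMem_support_iff]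
      intro hmem
      have := MvPolynomial.monomial_le_degreeOf s hmem
      have := hf s
      omega
    rw [hzero]
    apply Finset.sum_eq_zero
    intro e _
    rw [if_neg]
    intro hc
    have := congrArg (fun d : Fin r →₀ ℕ => d s) hc
    simp only [embNL_apply] at this
    have := (e s).2
    omega

/-- the number `T_{k,n}^(m)(r)` of `m`-fold multisequences of length `n`
over `F_q` with `n`th joint nonlinear complexity of order `k` at most `r` is at most
`q^((k+1)^r + m·r)`. -/
theorem count_multisequences_of_low_complexity
    {Fq : Type*} [Field Fq] [Fintype Fq] (k m n r : ℕ)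
    (hk1 : 1 ≤ k) (hk : k ≤ Fintype.card Fq - 1) (hm : 1 ≤ m)
    (hr1 : 1 ≤ r) (hrn : r ≤ n) :
    Set.ncard {Z : Fin n → Fin m → Fq | ∃ c ≤ r, SatisfiesNLRecursionFin Z k c}
      ≤ Fintype.card Fq ^ ((k + 1) ^ r + m * r) := by
  classical
  set F : (((Fin r → Fin (k + 1)) → Fq) × (Fin r → Fin m → Fq)) → (Fin n → Fin m → Fq) :=
    fun p => fun i => rebuildNL (polyOfNL k r p.1) p.2 i with hF
  have hsub : {Z : Fin n → Fin m → Fq | ∃ c ≤ r, SatisfiesNLRecursionFin Z k c}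
      ⊆ Set.range F := by
    rintro Z ⟨c, hc, hsat⟩
    obtain ⟨f, hdeg, hrec⟩ := satisfies_shift Z k c r hc hsat
    refine ⟨(fun e => MvPolynomial.coeff (embNL k r e) f,
      fun s => Z ⟨s, lt_of_lt_of_le s.2 hrn⟩), ?_⟩
    funext i
    simp only [hF, polyOfNL_coeff k r f hdeg]
    rw [rebuildNL_eq hrn Z f hrec i i.2]
  calc Set.ncard {Z : Fin n → Fin m → Fq | ∃ c ≤ r, SatisfiesNLRecursionFin Z k c}
      ≤ Set.ncard (Set.range F) := Set.ncard_le_ncard hsub (Set.finite_range F)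
    _ = Set.ncard (F '' Set.univ) := by rw [Set.image_univ]
    _ ≤ Set.ncard (Set.univ : Set (((Fin r → Fin (k + 1)) → Fq) × (Fin r → Fin m → Fq))) :=
        Set.ncard_image_le Set.finite_univ
    _ = Fintype.card (((Fin r → Fin (k + 1)) → Fq) × (Fin r → Fin m → Fq)) := by
        rw [Set.ncard_univ, Nat.card_eq_fintype_card]
    _ = Fintype.card Fq ^ ((k + 1) ^ r + m * r) := by
        rw [Fintype.card_prod, Fintype.card_fun, Fintype.card_fun, Fintype.card_fun,
          Fintype.card_fun, Fintype.card_fin, Fintype.card_fin, ← pow_mul, ← pow_add,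
          Fintype.card_fin]
end

section
/- Let 1 ≤ k ≤ q-1 and m ≥ 1, and equip the space (F_q^m)^∞ of m-fold multisequences over F_q with the product of uniform probability measures μ on F_q^m. For fixed ε > 0, the set A_n of multisequences Z with N_k^(m)(Z,n) ≤ log(mn)/log(k+1) - ε satisfies μ^∞(A_n) ≤ q^{(k+1)^{B_n} + m·B_n - m·n} for all sufficiently large n, where B_n = log(mn)/log(k+1) - ε. -/
/-- `Z` satisfies a recursion of order `c` by a polynomial of degree at most `k`
in each variable, over the first `n` terms of each component sequence. -/
def SatisfiesNLRecursion {Fq : Type*} [Field Fq] {m : ℕ}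
    (Z : Fin m → ℕ → Fq) (k n c : ℕ) : Prop :=
  ∃ f : MvPolynomial (Fin c) Fq,
    (∀ s : Fin c, MvPolynomial.degreeOf s f ≤ k) ∧
    ∀ j : Fin m, ∀ i : ℕ, i + c < n →
      Z j (i + c) = MvPolynomial.eval (fun s : Fin c => Z j (i + s)) f

open scoped Classical in
/-- The `n`th joint nonlinear complexity of order `k` of the `m`-fold
multisequence `Z` over `F_q`. -/
noncomputable def jointNLC {Fq : Type*} [Field Fq] {m : ℕ}
    (Z : Fin m → ℕ → Fq) (k n : ℕ) : ℕ :=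
  if ∀ j : Fin m, ∀ i : ℕ, i < n → Z j i = 0 then 0
  else sInf {c : ℕ | SatisfiesNLRecursion Z k n c}

variable {Fq : Type*} [Field Fq] [Fintype Fq] {m : ℕ}

instance fintypeTopMeasurable : MeasurableSpace (Fin m → Fq) := ⊤

instance : MeasurableSpace (ℕ → Fin m → Fq) := MeasurableSpace.pi

section AuxLemmas

lemma satisfiesNLRecursion_congr {Fq : Type*} [Field Fq] {m : ℕ}
    {Z Z' : Fin m → ℕ → Fq} {k n c : ℕ}
    (h : ∀ j i, i < n → Z j i = Z' j i) (hZ : SatisfiesNLRecursion Z k n c) :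
    SatisfiesNLRecursion Z' k n c := by
  obtain ⟨f, hdeg, hrec⟩ := hZ
  refine ⟨f, hdeg, fun j i hi => ?_⟩
  rw [← h j (i + c) hi, hrec j i hi]
  have harg : (fun s : Fin c => Z j (i + s)) = fun s : Fin c => Z' j (i + s) :=
    funext fun s => h j (i + s) (by have := s.isLt; omega)
  rw [harg]

lemma jointNLC_congr {Fq : Type*} [Field Fq] {m : ℕ}
    {Z Z' : Fin m → ℕ → Fq} {k n : ℕ}
    (h : ∀ j i, i < n → Z j i = Z' j i) : jointNLC Z k n = jointNLC Z' k n := by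
  have h2 : {c : ℕ | SatisfiesNLRecursion Z k n c} = {c : ℕ | SatisfiesNLRecursion Z' k n c} :=
    Set.ext fun c => ⟨satisfiesNLRecursion_congr h,
      satisfiesNLRecursion_congr (fun j i hi => (h j i hi).symm)⟩
  have h1 : (∀ j : Fin m, ∀ i : ℕ, i < n → Z j i = 0)
      ↔ (∀ j : Fin m, ∀ i : ℕ, i < n → Z' j i = 0) := by
    constructor
    · intro h0 j i hi; rw [← h j i hi]; exact h0 j i hi
    · intro h0 j i hi; rw [h j i hi]; exact h0 j i hi
  classical
  unfold jointNLC
  rw [h2]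
  exact if_congr h1 rfl rfl

lemma satisfiesNLRecursion_of_le {Fq : Type*} [Field Fq] {m : ℕ}
    {Z : Fin m → ℕ → Fq} {k n c : ℕ} (hnc : n ≤ c) :
    SatisfiesNLRecursion Z k n c :=
  ⟨0, fun _ => by simp, fun j i hi => absurd hi (by omega)⟩

lemma satisfiesNLRecursion_succ {Fq : Type*} [Field Fq] {m : ℕ}
    {Z : Fin m → ℕ → Fq} {k n c : ℕ}
    (h : SatisfiesNLRecursion Z k n c) : SatisfiesNLRecursion Z k n (c + 1) := by
  classical
  obtain ⟨f, hdeg, hrec⟩ := h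
  refine ⟨MvPolynomial.rename Fin.succ f, fun s => ?_, fun j i hi => ?_⟩
  · rw [MvPolynomial.degreeOf_def,
      MvPolynomial.degrees_rename_of_injective (Fin.succ_injective c)]
    induction s using Fin.cases with
    | zero =>
      rw [Multiset.count_eq_zero.mpr]
      · exact Nat.zero_le k
      · intro hmem
        obtain ⟨t, _, ht⟩ := Multiset.mem_map.mp hmem
        exact (Fin.succ_ne_zero t) ht
    | succ t =>
      rw [Multiset.count_map_eq_count' _ _ (Fin.succ_injective c),
        ← MvPolynomial.degreeOf_def]
      exact hdeg t
  · rw [MvPolynomial.eval_rename]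
    have h1 : i + (c + 1) = (i + 1) + c := by omega
    rw [h1, hrec j (i + 1) (by omega)]
    have harg : ((fun s : Fin (c + 1) => Z j (i + ↑s)) ∘ Fin.succ)
        = fun t : Fin c => Z j (i + 1 + ↑t) := by
      funext t
      simp only [Function.comp_apply, Fin.val_succ]
      congr 1
      omega
    rw [harg]

lemma satisfiesNLRecursion_of_jointNLC_le {Fq : Type*} [Field Fq] {m : ℕ}
    {Z : Fin m → ℕ → Fq} {k n r : ℕ}
    (h : jointNLC Z k n ≤ r) : SatisfiesNLRecursion Z k n r := by
  classical
  unfold jointNLC at h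
  split_ifs at h with h0
  · exact ⟨0, fun _ => by simp, fun j i hi => by rw [h0 j _ hi]; simp⟩
  · have hne : {c : ℕ | SatisfiesNLRecursion Z k n c}.Nonempty :=
      ⟨n, satisfiesNLRecursion_of_le le_rfl⟩
    exact Nat.le_induction (Nat.sInf_mem hne)
      (fun c _ hc => satisfiesNLRecursion_succ hc) r h

/-- Extend a finite multisequence of length `n` to an infinite one by zeros. -/
def extSeq {Fq : Type*} [Field Fq] {m n : ℕ} (W : Fin n → Fin m → Fq) :
    Fin m → ℕ → Fq :=
  fun j i => if h : i < n then W ⟨i, h⟩ j else 0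

lemma ext_determined {Fq : Type*} [Field Fq] {m : ℕ} {n r : ℕ} (hrn : r ≤ n)
    {W W' : Fin n → Fin m → Fq} (f : MvPolynomial (Fin r) Fq)
    (hW : ∀ j i, i + r < n →
      extSeq W j (i + r) = MvPolynomial.eval (fun s : Fin r => extSeq W j (i + s)) f)
    (hW' : ∀ j i, i + r < n →
      extSeq W' j (i + r) = MvPolynomial.eval (fun s : Fin r => extSeq W' j (i + s)) f)
    (hinit : ∀ (i : ℕ) (hn : i < n), i < r → W ⟨i, hn⟩ = W' ⟨i, hn⟩) : W = W' := by
  have key : ∀ i, ∀ hi : i < n, ∀ j, W ⟨i, hi⟩ j = W' ⟨i, hi⟩ j := by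
    intro i
    induction i using Nat.strong_induction_on with
    | _ i IH =>
      intro hi j
      by_cases hir : i < r
      · exact congrFun (hinit i hi hir) j
      · push_neg at hir
        have hext : ∀ l, l < i → extSeq W j l = extSeq W' j l := by
          intro l hl
          unfold extSeq
          split_ifs with h
          · exact IH l hl h j
          · rfl
        have h1 : (i - r) + r = i := by omega
        have h2 : (i - r) + r < n := by omega
        have heq : (fun s : Fin r => extSeq W j (i - r + s))
            = (fun s : Fin r => extSeq W' j (i - r + s)) := by
          funext s
          exact hext _ (by have := s.isLt; omega)
        have hkey : extSeq W j i = extSeq W' j i := by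
          rw [← h1, hW j (i - r) h2, hW' j (i - r) h2, heq]
        unfold extSeq at hkey
        rw [dif_pos hi, dif_pos hi] at hkey
        exact hkey
  funext i j
  exact (Fin.mk_val i) ▸ key i.1 i.isLt j

lemma poly_eq_of_coeffs {Fq : Type*} [Field Fq] {k r : ℕ}
    {f g : MvPolynomial (Fin r) Fq}
    (hf : ∀ s, MvPolynomial.degreeOf s f ≤ k) (hg : ∀ s, MvPolynomial.degreeOf s g ≤ k)
    (h : ∀ e : Fin r → Fin (k + 1),
      MvPolynomial.coeff (Finsupp.equivFunOnFinite.symm fun s => (e s : ℕ)) f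
        = MvPolynomial.coeff (Finsupp.equivFunOnFinite.symm fun s => (e s : ℕ)) g) :
    f = g := by
  apply MvPolynomial.ext
  intro d
  by_cases hd : ∀ s, d s ≤ k
  · have hde : (Finsupp.equivFunOnFinite.symm
        fun s : Fin r => (((⟨d s, by have := hd s; omega⟩ : Fin (k + 1))) : ℕ)) = d := by
      ext s
      simp
    have := h fun s => ⟨d s, by have := hd s; omega⟩
    rwa [hde] at this
  · push_neg at hd
    obtain ⟨s, hs⟩ := hd
    have hzf : MvPolynomial.coeff d f = 0 := by
      by_contra hc
      have hmem : d ∈ f.support := MvPolynomial.mem_support_iff.mpr hc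
      have := (MvPolynomial.degreeOf_lt_iff (Nat.succ_pos k)).mp
        (Nat.lt_succ_of_le (hf s)) d hmem
      omega
    have hzg : MvPolynomial.coeff d g = 0 := by
      by_contra hc
      have hmem : d ∈ g.support := MvPolynomial.mem_support_iff.mpr hc
      have := (MvPolynomial.degreeOf_lt_iff (Nat.succ_pos k)).mp
        (Nat.lt_succ_of_le (hg s)) d hmem
      omega
    rw [hzf, hzg]

lemma card_low_complexity_le (k : ℕ) {r n : ℕ} (hrn : r ≤ n) :
    Nat.card {W : Fin n → Fin m → Fq | jointNLC (extSeq W) k n ≤ r}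
      ≤ Fintype.card Fq ^ ((k + 1) ^ r + m * r) := by
  classical
  set S := {W : Fin n → Fin m → Fq | jointNLC (extSeq W) k n ≤ r} with hS
  have hsat : ∀ w : S, SatisfiesNLRecursion (extSeq w.1) k n r := fun w =>
    satisfiesNLRecursion_of_jointNLC_le w.2
  let p : S → MvPolynomial (Fin r) Fq := fun w => (hsat w).choose
  have hp : ∀ w : S, (∀ s, MvPolynomial.degreeOf s (p w) ≤ k) ∧
      ∀ j i, i + r < n → extSeq w.1 j (i + r)
        = MvPolynomial.eval (fun s : Fin r => extSeq w.1 j (i + s)) (p w) := fun w =>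
    (hsat w).choose_spec
  let F : S → ((Fin r → Fin (k + 1)) → Fq) × (Fin r → Fin m → Fq) := fun w =>
    ((fun e => MvPolynomial.coeff (Finsupp.equivFunOnFinite.symm fun s => (e s : ℕ)) (p w)),
     fun i j => w.1 ⟨i, lt_of_lt_of_le i.isLt hrn⟩ j)
  have hinj : Function.Injective F := by
    intro w w' hww
    have h1 := congrArg Prod.fst hww
    have h2 := congrArg Prod.snd hww
    simp only [F] at h1 h2
    have hfeq : p w = p w' := poly_eq_of_coeffs (hp w).1 (hp w').1 (fun e => congrFun h1 e)
    have hrec' := (hp w').2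
    rw [← hfeq] at hrec'
    have hWeq : w.1 = w'.1 := by
      refine ext_determined hrn (p w) (hp w).2 hrec' ?_
      intro i hn hir
      funext j
      exact congrFun (congrFun h2 ⟨i, hir⟩) j
    exact Subtype.ext hWeq
  calc Nat.card S ≤ Nat.card (((Fin r → Fin (k + 1)) → Fq) × (Fin r → Fin m → Fq)) :=
        Nat.card_le_card_of_injective F hinj
    _ = Fintype.card Fq ^ ((k + 1) ^ r + m * r) := by
        rw [Nat.card_eq_fintype_card, Fintype.card_prod]
        simp only [Fintype.card_fun, Fintype.card_fin]
        rw [pow_add, ← pow_mul]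

end AuxLemmas

open Filter MeasureTheory in
/-- for the product of uniform measures `μ` on `(F_q^m)^∞` (characterized on
cylinder sets), the set `A_n = {Z | N_k^(m)(Z,n) ≤ B_n}` with
`B_n = log(mn)/log(k+1) - ε` satisfies `μ(A_n) ≤ q^{(k+1)^{B_n} + m·B_n - m·n}`
for all sufficiently large `n`. -/
theorem measure_of_low_complexity_set_le
    (k : ℕ) (hk1 : 1 ≤ k) (hkq : k ≤ Fintype.card Fq - 1) (hm : 1 ≤ m)
    (ε : ℝ) (hε : 0 < ε)
    (B : ℕ → ℝ) (hB : ∀ n : ℕ, B n = Real.log (m * n) / Real.log (k + 1) - ε)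
    (μ : Measure (ℕ → Fin m → Fq)) [IsProbabilityMeasure μ]
    (hμ : ∀ (n : ℕ) (S : Set (Fin n → Fin m → Fq)),
      μ {Z : ℕ → Fin m → Fq | (fun i : Fin n => Z i) ∈ S}
        = (Nat.card S : ENNReal) / (Fintype.card Fq : ENNReal) ^ (m * n)) :
    ∀ᶠ n in atTop,
      μ {Z : ℕ → Fin m → Fq | (jointNLC (fun j i => Z i j) k n : ℝ) ≤ B n}
        ≤ (Fintype.card Fq : ENNReal) ^ (((k : ℝ) + 1) ^ (B n) + m * B n - m * n) := by
  classical
  have hq2 : 2 ≤ Fintype.card Fq := Fintype.one_lt_card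
  have hk1R : (1 : ℝ) < (k : ℝ) + 1 := by
    have : (1 : ℝ) ≤ (k : ℝ) := by exact_mod_cast hk1
    linarith
  have hlogk : 0 < Real.log ((k : ℝ) + 1) := Real.log_pos hk1R
  have hmpos : (0 : ℝ) < m := by
    have : (1 : ℝ) ≤ (m : ℝ) := by exact_mod_cast hm
    linarith
  have htmn : Tendsto (fun n : ℕ => (m : ℝ) * n) atTop atTop :=
    Filter.Tendsto.const_mul_atTop hmpos tendsto_natCast_atTop_atTop
  have hE1 : ∀ᶠ n : ℕ in atTop, 0 ≤ B n := by
    filter_upwards [(Real.tendsto_log_atTop.comp htmn).eventually_ge_atTop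
      (ε * Real.log ((k : ℝ) + 1))] with n hn
    rw [hB n, sub_nonneg, le_div_iff₀ hlogk]
    exact hn
  have hc : 0 < Real.log ((k : ℝ) + 1) / m := div_pos hlogk hmpos
  have hE2 : ∀ᶠ n : ℕ in atTop, B n ≤ n := by
    filter_upwards [htmn.eventually (Real.isLittleO_log_id_atTop.def hc),
      htmn.eventually_ge_atTop 0] with n hn hn0
    rw [hB n]
    simp only [id_eq, Real.norm_eq_abs] at hn
    have hlogle : Real.log ((m : ℝ) * n) ≤ (Real.log ((k : ℝ) + 1) / m) * ((m : ℝ) * n) := by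
      calc Real.log ((m : ℝ) * n) ≤ |Real.log ((m : ℝ) * n)| := le_abs_self _
        _ ≤ (Real.log ((k : ℝ) + 1) / m) * |(m : ℝ) * n| := hn
        _ = (Real.log ((k : ℝ) + 1) / m) * ((m : ℝ) * n) := by rw [abs_of_nonneg hn0]
    have hdiv : Real.log ((m : ℝ) * n) / Real.log ((k : ℝ) + 1) ≤ n := by
      rw [div_le_iff₀ hlogk]
      calc Real.log ((m : ℝ) * n) ≤ (Real.log ((k : ℝ) + 1) / m) * ((m : ℝ) * n) := hlogle
        _ = (n : ℝ) * Real.log ((k : ℝ) + 1) := by field_simp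
    linarith
  filter_upwards [hE1, hE2] with n hBnn hBn
  set r := ⌊B n⌋₊ with hr
  have hrB : (r : ℝ) ≤ B n := Nat.floor_le hBnn
  have hrn : r ≤ n := by
    have : (r : ℝ) ≤ n := hrB.trans hBn
    exact_mod_cast this
  have hset : {Z : ℕ → Fin m → Fq | (jointNLC (fun j i => Z i j) k n : ℝ) ≤ B n}
      = {Z : ℕ → Fin m → Fq | (fun i : Fin n => Z i) ∈
          {W : Fin n → Fin m → Fq | jointNLC (extSeq W) k n ≤ r}} := by
    ext Z
    simp only [Set.mem_setOf_eq]
    have hcongr : jointNLC (fun j i => Z i j) k n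
        = jointNLC (extSeq (fun i : Fin n => Z i)) k n :=
      jointNLC_congr (fun j i hi => by simp [extSeq, hi])
    rw [hcongr, ← Nat.le_floor_iff hBnn]
  rw [hset, hμ n _]
  have hcard := card_low_complexity_le (Fq := Fq) (m := m) k hrn
  have hq1 : (1 : ENNReal) ≤ (Fintype.card Fq : ENNReal) := by
    exact_mod_cast Nat.one_le_of_lt hq2
  have hqne0 : (Fintype.card Fq : ENNReal) ≠ 0 :=
    Nat.cast_ne_zero.mpr (by omega)
  have hqnetop : (Fintype.card Fq : ENNReal) ≠ ⊤ := ENNReal.natCast_ne_top _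
  have step1 : (Nat.card {W : Fin n → Fin m → Fq | jointNLC (extSeq W) k n ≤ r} : ENNReal)
      ≤ (Fintype.card Fq : ENNReal) ^ ((((k + 1) ^ r + m * r : ℕ)) : ℝ) := by
    rw [ENNReal.rpow_natCast]
    exact_mod_cast hcard
  have hexp : ((((k + 1) ^ r + m * r : ℕ)) : ℝ) ≤ ((k : ℝ) + 1) ^ (B n) + m * B n := by
    push_cast
    have h1 : ((k : ℝ) + 1) ^ r ≤ ((k : ℝ) + 1) ^ (B n) := by
      rw [← Real.rpow_natCast ((k : ℝ) + 1) r]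
      exact Real.rpow_le_rpow_of_exponent_le (le_of_lt hk1R) hrB
    have h2 : (m : ℝ) * r ≤ (m : ℝ) * B n :=
      mul_le_mul_of_nonneg_left hrB (le_of_lt hmpos)
    linarith
  have step2 : (Nat.card {W : Fin n → Fin m → Fq | jointNLC (extSeq W) k n ≤ r} : ENNReal)
      ≤ (Fintype.card Fq : ENNReal) ^ (((k : ℝ) + 1) ^ (B n) + m * B n) :=
    step1.trans (ENNReal.rpow_le_rpow_of_exponent_le hq1 hexp)
  refine le_trans (ENNReal.div_le_div_right step2 _) (le_of_eq ?_)
  rw [ENNReal.rpow_sub _ _ hqne0 hqnetop]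
  congr 1
  rw [← ENNReal.rpow_natCast (Fintype.card Fq : ENNReal) (m * n)]
  congr 1
  push_cast
  ring
end

section
/- Let γ ∈ F_q^* have order t, and for ξ ∈ F_q^* define ||ξ||_t = b if ξ = γ^b with 0 ≤ b < t, and ||ξ||_t = t if ξ ∉ ⟨γ⟩. Let α_1, ..., α_m ∈ F_q^* be pairwise distinct, and let δ_t = min over j1 ≠ j2 of ||α_{j1} α_{j2}^{-1}||_t. If 0 ≤ n - c ≤ δ_t, then the m(n-c) elements α_j γ^i for 0 ≤ i ≤ n-c-1 and 1 ≤ j ≤ m are pairwise distinct. -/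
open scoped Classical in
/-- `‖ξ‖_t = b` if `ξ = γ^b` with `0 ≤ b < t`, and `‖ξ‖_t = t` if `ξ ∉ ⟨γ⟩`. -/
noncomputable def normT {Fq : Type*} [Field Fq] (γ : Fq) (t : ℕ) (ξ : Fq) : ℕ :=
  if ∃ b : ℕ, b < t ∧ ξ = γ ^ b then sInf {b : ℕ | ξ = γ ^ b} else t

/-- `δ_t`: the minimum of `‖α_{j1} α_{j2}⁻¹‖_t` over `j1 ≠ j2`. -/
noncomputable def deltaT {Fq : Type*} [Field Fq] {m : ℕ}
    (γ : Fq) (t : ℕ) (α : Fin m → Fq) : ℕ :=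
  sInf {d : ℕ | ∃ j1 j2 : Fin m, j1 ≠ j2 ∧ d = normT γ t (α j1 * (α j2)⁻¹)}

lemma normT_le {Fq : Type*} [Field Fq] (γ : Fq) (t : ℕ) (ξ : Fq) : normT γ t ξ ≤ t := by
  classical
  unfold normT
  split
  · rename_i h
    obtain ⟨b, hb, hξ⟩ := h
    exact le_trans (Nat.sInf_le hξ) hb.le
  · exact le_refl t

lemma normT_pow_le {Fq : Type*} [Field Fq] (γ : Fq) (t d : ℕ) (hd : d < t) :
    normT γ t (γ ^ d) ≤ d := by
  classical
  unfold normT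
  rw [if_pos ⟨d, hd, rfl⟩]
  exact Nat.sInf_le rfl

lemma deltaT_le {Fq : Type*} [Field Fq] {m : ℕ} (γ : Fq) (t : ℕ) (α : Fin m → Fq)
    {j1 j2 : Fin m} (h : j1 ≠ j2) : deltaT γ t α ≤ normT γ t (α j1 * (α j2)⁻¹) :=
  Nat.sInf_le ⟨j1, j2, h, rfl⟩

/-- if `0 ≤ n - c ≤ δ_t`, then the `m(n-c)` elements `α_j γ^i`,
`0 ≤ i ≤ n-c-1`, `1 ≤ j ≤ m`, are pairwise distinct. -/
theorem inversive_elements_pairwise_distinct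
    {Fq : Type*} [Field Fq] [Fintype Fq] {m : ℕ}
    (γ : Fq) (t : ℕ) (hγt : orderOf γ = t) (hγ0 : γ ≠ 0)
    (α : Fin m → Fq) (hα0 : ∀ j, α j ≠ 0) (hαinj : Function.Injective α)
    (n c : ℕ) (hcn : c ≤ n) (hδ : n - c ≤ deltaT γ t α) :
    ∀ i1 i2 : ℕ, i1 < n - c → i2 < n - c → ∀ j1 j2 : Fin m,
      α j1 * γ ^ i1 = α j2 * γ ^ i2 → i1 = i2 ∧ j1 = j2 := by
  have ht : 0 < t := by
    rw [← hγt]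
    have hfin : IsOfFinOrder γ := isOfFinOrder_iff_pow_eq_one.mpr
      ⟨Fintype.card Fq - 1, by have := Fintype.one_lt_card (α := Fq); omega,
        FiniteField.pow_card_sub_one_eq_one γ hγ0⟩
    exact hfin.orderOf_pos
  -- key lemma: case j1 ≠ j2, i1 ≤ i2 is impossible
  have key : ∀ i1 i2 : ℕ, i1 ≤ i2 → i1 < n - c → i2 < n - c → ∀ j1 j2 : Fin m,
      j1 ≠ j2 → α j1 * γ ^ i1 = α j2 * γ ^ i2 → False := by
    intro i1 i2 hle hi1 hi2 j1 j2 hne heq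
    set d := i2 - i1 with hd
    have hdlt : d < n - c := lt_of_le_of_lt (Nat.sub_le _ _) hi2
    have hdt : d < t := by
      have h1 : deltaT γ t α ≤ t :=
        le_trans (deltaT_le γ t α hne) (normT_le γ t _)
      omega
    have hαeq : α j1 * (α j2)⁻¹ = γ ^ d := by
      have hγi : (γ : Fq) ^ i1 ≠ 0 := pow_ne_zero _ hγ0
      have hpow : (γ : Fq) ^ i2 = γ ^ d * γ ^ i1 := by
        rw [← pow_add]; congr 1; omega
      have h3 : α j1 * γ ^ i1 = (α j2 * γ ^ d) * γ ^ i1 := by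
        rw [heq, hpow]; ring
      have h4 : α j1 = α j2 * γ ^ d := mul_right_cancel₀ hγi h3
      rw [h4, mul_comm (α j2) (γ ^ d), mul_inv_cancel_right₀ (hα0 j2)]
    have h2 : deltaT γ t α ≤ d := by
      calc deltaT γ t α ≤ normT γ t (α j1 * (α j2)⁻¹) := deltaT_le γ t α hne
        _ = normT γ t (γ ^ d) := by rw [hαeq]
        _ ≤ d := normT_pow_le γ t d hdt
    omega
  intro i1 i2 hi1 hi2 j1 j2 heq
  by_cases hj : j1 = j2
  · subst hj
    have hγeq : (γ : Fq) ^ i1 = γ ^ i2 := mul_left_cancel₀ (hα0 j1) heq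
    have hmod : i1 ≡ i2 [MOD t] := by
      set u : Fqˣ := Units.mk0 γ hγ0 with hu
      have hueq : u ^ i1 = u ^ i2 := by
        ext
        simpa [hu] using hγeq
      have h5 := (pow_eq_pow_iff_modEq (x := u)).mp hueq
      rwa [← orderOf_units, hu, Units.val_mk0, hγt] at h5
    have hnc : n - c ≤ t := by
      by_cases hS : {d : ℕ | ∃ ja jb : Fin m, ja ≠ jb ∧
          d = normT γ t (α ja * (α jb)⁻¹)}.Nonempty
      · obtain ⟨d, ja, jb, hne', hd⟩ := hS
        have h1 := le_trans (deltaT_le γ t α hne') (normT_le γ t (α ja * (α jb)⁻¹))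
        omega
      · have h0 : deltaT γ t α = 0 := by
          rw [deltaT, Set.not_nonempty_iff_eq_empty.mp hS, Nat.sInf_empty]
        omega
    exact ⟨Nat.ModEq.eq_of_lt_of_lt hmod (lt_of_lt_of_le hi1 hnc) (lt_of_lt_of_le hi2 hnc), rfl⟩
  · rcases le_total i1 i2 with h | h
    · exact absurd heq (fun heq => key i1 i2 h hi1 hi2 j1 j2 hj heq)
    · exact absurd heq.symm (fun heq => key i2 i1 h hi2 hi1 j2 j1 (Ne.symm hj) heq)
end

section
/- Let q ≥ 3 be a prime power, γ ∈ F_q^* of order t, and let Z be the m-fold multisequence over F_q defined by σ_i^(j) = (α_j γ^i − β)^{q-2} for pairwise distinct α_1,...,α_m ∈ F_q^* (2 ≤ m ≤ q−1) and β ∈ F_q^*. Then for integers 1 ≤ k ≤ q−1 and n ≥ 1, N_k^(m)(Z,n) ≥ min( (mn−2)/(m+k+1), (δ_t m − 2)/(k+1), t ). -/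
section AuxJNLC

variable {Fq : Type*} [Field Fq]

lemma normT_le_aux (γ : Fq) (t : ℕ) (ξ : Fq) : normT γ t ξ ≤ t := by
  unfold normT
  split
  · next h =>
      obtain ⟨b, hb, hξ⟩ := h
      exact le_of_lt (lt_of_le_of_lt (Nat.sInf_le hξ) hb)
  · exact le_rfl

lemma normT_le_of_aux {γ : Fq} {t : ℕ} {ξ : Fq} {b : ℕ} (hb : b < t) (h : ξ = γ ^ b) :
    normT γ t ξ ≤ b := by
  unfold normT
  rw [if_pos ⟨b, hb, h⟩]
  exact Nat.sInf_le h

lemma deltaT_le_aux {m : ℕ} (γ : Fq) (t : ℕ) (α : Fin m → Fq) {j1 j2 : Fin m} (h : j1 ≠ j2) :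
    deltaT γ t α ≤ normT γ t (α j1 * (α j2)⁻¹) :=
  Nat.sInf_le ⟨j1, j2, h, rfl⟩

lemma pow_q_sub_two_aux [Fintype Fq] {q : ℕ} (hq : q = Fintype.card Fq) (hq3 : 3 ≤ q)
    (x : Fq) : x ^ (q - 2) = x⁻¹ := by
  rcases eq_or_ne x 0 with rfl | hx
  · rw [zero_pow (by omega : q - 2 ≠ 0), inv_zero]
  · have h1 : x ^ (q - 2) * x = 1 := by
      rw [← pow_succ, show q - 2 + 1 = q - 1 by omega, hq]
      exact FiniteField.pow_card_sub_one_eq_one x hx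
    field_simp
    linear_combination h1

/-- The key contradiction: a low-order recursion is impossible. -/
lemma key_aux [Fintype Fq] (q : ℕ) (hq : q = Fintype.card Fq) (hq3 : 3 ≤ q)
    {m : ℕ} (hm2 : 2 ≤ m) (γ : Fq) (t : ℕ) (hγt : orderOf γ = t) (hγ0 : γ ≠ 0)
    (α : Fin m → Fq) (hα0 : ∀ j, α j ≠ 0)
    (β : Fq) (hβ : β ≠ 0) (k n c : ℕ)
    (h1 : c * (m + k + 1) + 3 ≤ m * n)
    (h2 : c * (k + 1) + 3 ≤ m * deltaT γ t α)
    (h3 : c < t)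
    (hrec : SatisfiesNLRecursion
      (fun (j : Fin m) (i : ℕ) => (α j * γ ^ i - β) ^ (q - 2)) k n c) : False := by
  classical
  obtain ⟨f, hfdeg, hfrec⟩ := hrec
  set δ := deltaT γ t α with hδ
  -- arithmetic preliminaries
  have hmc : c * m ≤ c * (m + k + 1) := Nat.mul_le_mul_left c (by omega)
  have hcm : c * m = m * c := Nat.mul_comm c m
  have hck : c * (m + k + 1) = c * m + c * k + c := by ring
  have hck2 : c * (k + 1) = c * k + c := by ring
  have hcn : c < n := by
    by_contra hcon
    push_neg at hcon
    have : m * n ≤ m * c := Nat.mul_le_mul_left m hcon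
    omega
  obtain ⟨d, hd⟩ : ∃ d, n = c + d := ⟨n - c, by omega⟩
  have hmn : m * n = m * c + m * d := by rw [hd, Nat.mul_add]
  set L := min d δ with hL
  have hδt : δ ≤ t := by
    have h01 : (⟨0, by omega⟩ : Fin m) ≠ (⟨1, by omega⟩ : Fin m) := by
      intro h
      simpa using congrArg Fin.val h
    exact le_trans (deltaT_le_aux γ t α h01) (normT_le_aux γ t _)
  have hLd : L ≤ d := min_le_left d δ
  have hLδ : L ≤ δ := min_le_right d δ
  have hLt : L ≤ t := le_trans hLδ hδt
  have hmd : c * k + c + 3 ≤ m * d := by omega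
  have hmδ2 : c * k + c + 3 ≤ m * δ := by omega
  have hmL : c * k + c + 3 ≤ m * L := by
    rcases le_total d δ with hle | hle
    · rw [hL, min_eq_left hle]; exact hmd
    · rw [hL, min_eq_right hle]; exact hmδ2
  have hL1 : 1 ≤ L := by
    rcases Nat.eq_zero_or_pos L with h0 | h; · rw [h0, Nat.mul_zero] at hmL; omega
    exact h
  have hpow : ∀ x : Fq, x ^ (q - 2) = x⁻¹ := pow_q_sub_two_aux hq hq3
  -- construction of the polynomial G
  set D : ℕ → Polynomial Fq := fun s => Polynomial.C (γ ^ s) * Polynomial.X - Polynomial.C β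
    with hD
  have hDdeg : ∀ s : ℕ, (D s).natDegree ≤ 1 := by
    intro s
    rw [hD]
    refine le_trans (Polynomial.natDegree_sub_le _ _) (max_le ?_ ?_)
    · exact le_trans (Polynomial.natDegree_C_mul_le _ _) (by simp)
    · simp
  have hpowinj : ∀ a b : ℕ, a ≤ b → b < t → (γ : Fq) ^ a = γ ^ b → a = b := by
    intro a b hab hbt he
    have h1 : (γ : Fq) ^ a * γ ^ (b - a) = γ ^ a * 1 := by
      rw [← pow_add, show a + (b - a) = b from by omega, mul_one]
      exact he.symm
    have h2 : (γ : Fq) ^ (b - a) = 1 := mul_left_cancel₀ (pow_ne_zero a hγ0) h1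
    have h3 : t ∣ b - a := hγt ▸ orderOf_dvd_of_pow_eq_one h2
    rcases Nat.eq_zero_or_pos (b - a) with h4 | h4
    · omega
    · have := Nat.le_of_dvd h4 h3
      omega
  set P : Polynomial Fq :=
    ∑ e ∈ f.support, Polynomial.C (MvPolynomial.coeff e f) *
      ∏ s : Fin c, (D (s : ℕ)) ^ (k - e s) with hP
  have hesk : ∀ e ∈ f.support, ∀ s : Fin c, e s ≤ k := by
    intro e he s
    have h1 : e s ≤ f.support.sup fun m => m s := Finset.le_sup (f := fun m => m s) he
    rw [← MvPolynomial.degreeOf_eq_sup] at h1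
    exact le_trans h1 (hfdeg s)
  have hPdeg : P.natDegree ≤ c * k := by
    rw [hP]
    apply Polynomial.natDegree_sum_le_of_forall_le
    intro e he
    refine le_trans (Polynomial.natDegree_C_mul_le _ _) ?_
    refine le_trans (Polynomial.natDegree_prod_le _ _) ?_
    calc ∑ s : Fin c, ((D (s : ℕ)) ^ (k - e s)).natDegree
        ≤ ∑ _s : Fin c, k := by
          apply Finset.sum_le_sum
          intro s _
          refine le_trans Polynomial.natDegree_pow_le ?_
          calc (k - e s) * (D (s : ℕ)).natDegree ≤ (k - e s) * 1 :=
                Nat.mul_le_mul_left _ (hDdeg _)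
            _ ≤ k := by omega
      _ = c * k := by simp [Finset.sum_const, Finset.card_univ]
  set G : Polynomial Fq := D c * P - ∏ s : Fin c, (D (s : ℕ)) ^ k with hG
  have hGdeg : G.natDegree ≤ c * k + 1 := by
    rw [hG]
    refine le_trans (Polynomial.natDegree_sub_le _ _) (max_le ?_ ?_)
    · refine le_trans Polynomial.natDegree_mul_le ?_
      have := hDdeg c
      omega
    · refine le_trans (Polynomial.natDegree_prod_le _ _) ?_
      calc ∑ s : Fin c, ((D (s : ℕ)) ^ k).natDegree
          ≤ ∑ _s : Fin c, k := by
            apply Finset.sum_le_sum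
            intro s _
            refine le_trans Polynomial.natDegree_pow_le ?_
            calc k * (D (s : ℕ)).natDegree ≤ k * 1 := Nat.mul_le_mul_left _ (hDdeg _)
              _ ≤ k := by omega
        _ = c * k := by simp [Finset.sum_const, Finset.card_univ]
      omega
  -- evaluation of P at points with nonvanishing denominators
  have hPeval : ∀ u : Fq, (∀ s : ℕ, s < c → γ ^ s * u - β ≠ 0) →
      P.eval u = (∏ s : Fin c, (γ ^ (s : ℕ) * u - β) ^ k) *
        MvPolynomial.eval (fun s : Fin c => (γ ^ (s : ℕ) * u - β)⁻¹) f := by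
    intro u hu
    rw [MvPolynomial.eval_eq', Finset.mul_sum, hP, Polynomial.eval_finset_sum]
    apply Finset.sum_congr rfl
    intro e he
    have hterm : ∀ s : Fin c, (γ ^ (s : ℕ) * u - β) ^ (k - e s) =
        (γ ^ (s : ℕ) * u - β) ^ k * ((γ ^ (s : ℕ) * u - β)⁻¹) ^ (e s) := by
      intro s
      rw [inv_pow, ← pow_sub₀ _ (hu s s.isLt) (hesk e he s)]
    calc (Polynomial.C (MvPolynomial.coeff e f) *
            ∏ s : Fin c, (D (s : ℕ)) ^ (k - e s)).eval u
        = MvPolynomial.coeff e f * ∏ s : Fin c, (γ ^ (s : ℕ) * u - β) ^ (k - e s) := by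
          rw [Polynomial.eval_mul, Polynomial.eval_C, Polynomial.eval_prod]
          congr 1
          apply Finset.prod_congr rfl
          intro s _
          rw [Polynomial.eval_pow, hD]
          simp
      _ = MvPolynomial.coeff e f * ∏ s : Fin c,
            ((γ ^ (s : ℕ) * u - β) ^ k * ((γ ^ (s : ℕ) * u - β)⁻¹) ^ (e s)) := by
          rw [Finset.prod_congr rfl (fun s _ => hterm s)]
      _ = (∏ s : Fin c, (γ ^ (s : ℕ) * u - β) ^ k) *
            (MvPolynomial.coeff e f * ∏ s : Fin c, ((γ ^ (s : ℕ) * u - β)⁻¹) ^ (e s)) := by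
          rw [Finset.prod_mul_distrib]; ring
  -- the point sets
  set U : Finset Fq :=
    Finset.image (fun p : Fin m × ℕ => α p.1 * γ ^ p.2)
      ((Finset.univ : Finset (Fin m)) ×ˢ Finset.range L) with hU
  have hcross : ∀ (j j' : Fin m) (i i' : ℕ), i < L → i' < L → i ≤ i' →
      α j * γ ^ i = α j' * γ ^ i' → j = j' := by
    intro j j' i i' hi hi' hle heq
    by_contra hne
    have h5 : α j = α j' * γ ^ (i' - i) := by
      apply mul_right_cancel₀ (pow_ne_zero i hγ0)
      rw [mul_assoc, ← pow_add, show i' - i + i = i' from by omega]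
      exact heq
    have hd6 : α j * (α j')⁻¹ = γ ^ (i' - i) := by
      rw [h5, mul_comm (α j') (γ ^ (i' - i)), mul_inv_cancel_right₀ (hα0 j')]
    have h7 : normT γ t (α j * (α j')⁻¹) ≤ i' - i :=
      normT_le_of_aux (by omega) hd6
    have h8 : δ ≤ normT γ t (α j * (α j')⁻¹) := deltaT_le_aux γ t α hne
    omega
  have hsame : ∀ (i i' : ℕ), i < L → i' < L → (γ : Fq) ^ i = γ ^ i' → i = i' := by
    intro i i' hi hi' heq
    rcases le_total i i' with h | h
    · exact hpowinj i i' h (by omega) heq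
    · exact (hpowinj i' i h (by omega) heq.symm).symm
  have hUcard : U.card = m * L := by
    rw [hU, Finset.card_image_of_injOn, Finset.card_product, Finset.card_univ,
      Fintype.card_fin, Finset.card_range]
    intro p hp p' hp' heq
    obtain ⟨j, i⟩ := p
    obtain ⟨j', i'⟩ := p'
    simp only [Finset.coe_product, Finset.coe_univ, Finset.coe_range, Set.mem_prod,
      Set.mem_univ, Set.mem_Iio, true_and] at hp hp'
    have hjj : j = j' := by
      rcases le_total i i' with h | h
      · exact hcross j j' i i' hp hp' h heq
      · exact (hcross j' j i' i hp' hp h heq.symm).symm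
    subst hjj
    have hii : i = i' := hsame i i' hp hp' (mul_left_cancel₀ (hα0 j) heq)
    simp [hii]
  set Bset : Finset Fq := (Finset.range (c + 1)).image (fun s => β * (γ ^ s)⁻¹) with hBset
  have hBcard : Bset.card ≤ c + 1 := le_trans Finset.card_image_le (by simp)
  set V : Finset Fq := U \ Bset with hV
  have hVcard : c * k + 2 ≤ V.card := by
    have h9 : U.card - Bset.card ≤ V.card := Finset.le_card_sdiff Bset U
    omega
  -- G vanishes on V
  have hroot : ∀ u ∈ V, G.eval u = 0 := by
    intro u hu
    obtain ⟨hUu, hBu⟩ := Finset.mem_sdiff.1 hu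
    obtain ⟨p, hp, hpu⟩ := Finset.mem_image.1 hUu
    obtain ⟨j, i⟩ := p
    simp only [Finset.mem_product, Finset.mem_univ, Finset.mem_range, true_and] at hp
    subst hpu
    set u := α j * γ ^ i with hu'
    have hgood : ∀ s : ℕ, s ≤ c → γ ^ s * u - β ≠ 0 := by
      intro s hs h0
      apply hBu
      refine Finset.mem_image.2 ⟨s, Finset.mem_range.2 (by omega), ?_⟩
      have h1 : γ ^ s * u = β := by linear_combination h0
      rw [← h1, mul_comm (γ ^ s) u, mul_inv_cancel_right₀ (pow_ne_zero s hγ0)]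
    have hZ : ∀ s : ℕ, (α j * γ ^ (i + s) - β) ^ (q - 2) = (γ ^ s * u - β)⁻¹ := by
      intro s
      rw [hpow]
      congr 1
      rw [pow_add, hu']
      ring
    have hic : i + c < n := by omega
    have hrec := hfrec j i hic
    have hfun : (fun s : Fin c => (α j * γ ^ (i + (s : ℕ)) - β) ^ (q - 2)) =
        (fun s : Fin c => (γ ^ (s : ℕ) * u - β)⁻¹) := funext fun s => hZ (s : ℕ)
    have hkey : (γ ^ c * u - β)⁻¹ =
        MvPolynomial.eval (fun s : Fin c => (γ ^ (s : ℕ) * u - β)⁻¹) f := by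
      rw [← hZ c]
      rw [show (α j * γ ^ (i + c) - β) ^ (q - 2) =
        MvPolynomial.eval (fun s : Fin c => (α j * γ ^ (i + (s : ℕ)) - β) ^ (q - 2)) f from hrec]
      rw [hfun]
    have hevalD : ∀ s : ℕ, (D s).eval u = γ ^ s * u - β := by
      intro s; rw [hD]; simp
    rw [hG]
    rw [Polynomial.eval_sub, Polynomial.eval_mul, Polynomial.eval_prod]
    rw [hevalD c, hPeval u (fun s hs => hgood s (le_of_lt hs)), ← hkey]
    have hprodeq : ∀ s : Fin c, ((D (s : ℕ)) ^ k).eval u = (γ ^ (s : ℕ) * u - β) ^ k := by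
      intro s; rw [Polynomial.eval_pow, hevalD]
    rw [Finset.prod_congr rfl (fun s _ => hprodeq s)]
    rw [mul_comm (∏ s : Fin c, (γ ^ (s : ℕ) * u - β) ^ k) ((γ ^ c * u - β)⁻¹),
      ← mul_assoc, mul_inv_cancel₀ (hgood c le_rfl), one_mul, sub_self]
  -- G is nonzero
  have hu0 : G.eval (β * (γ ^ c)⁻¹) ≠ 0 := by
    have hc0 : γ ^ c * (β * (γ ^ c)⁻¹) - β = 0 := by
      rw [mul_comm β ((γ ^ c)⁻¹), ← mul_assoc, mul_inv_cancel₀ (pow_ne_zero c hγ0), one_mul,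
        sub_self]
    have hevalD : ∀ s : ℕ, (D s).eval (β * (γ ^ c)⁻¹) = γ ^ s * (β * (γ ^ c)⁻¹) - β := by
      intro s; rw [hD]; simp
    rw [hG, Polynomial.eval_sub, Polynomial.eval_mul, hevalD c, hc0, zero_mul, zero_sub,
      Polynomial.eval_prod]
    rw [neg_ne_zero]
    apply Finset.prod_ne_zero_iff.2
    intro s _
    rw [Polynomial.eval_pow, hevalD]
    apply pow_ne_zero
    intro h0
    have h1 : γ ^ (s : ℕ) * (β * (γ ^ c)⁻¹) = β := by linear_combination h0
    have h2 : (γ : Fq) ^ (s : ℕ) = γ ^ c := by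
      apply mul_right_cancel₀ (inv_ne_zero (pow_ne_zero c hγ0))
      apply mul_left_cancel₀ hβ
      calc β * (γ ^ (s : ℕ) * (γ ^ c)⁻¹) = γ ^ (s : ℕ) * (β * (γ ^ c)⁻¹) := by ring
        _ = β := h1
        _ = β * (γ ^ c * (γ ^ c)⁻¹) := by
            rw [mul_inv_cancel₀ (pow_ne_zero c hγ0), mul_one]
    have h3 : (s : ℕ) = c := hpowinj (s : ℕ) c (le_of_lt s.isLt) h3 h2
    exact absurd h3 (by omega)
  have hGne : G ≠ 0 := by
    intro h
    rw [h, Polynomial.eval_zero] at hu0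
    exact hu0 rfl
  -- count roots
  have hsubV : V ⊆ G.roots.toFinset := by
    intro u hu
    rw [Multiset.mem_toFinset, Polynomial.mem_roots']
    exact ⟨hGne, hroot u hu⟩
  have hchain : V.card ≤ G.natDegree :=
    le_trans (Finset.card_le_card hsubV)
      (le_trans (Multiset.toFinset_card_le _) (Polynomial.card_roots' G))
  omega

end AuxJNLC

/-- Theorem 2: for the inversive multisequence
`σ_i^(j) = (α_j γ^i − β)^{q−2}`,
`N_k^(m)(Z,n) ≥ min( (mn−2)/(m+k+1), (δ_t m − 2)/(k+1), t )`. -/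
theorem jointNLC_inversive_period_t_lower_bound
    {Fq : Type*} [Field Fq] [Fintype Fq] (q : ℕ) (hq : q = Fintype.card Fq)
    (hq3 : 3 ≤ q) {m : ℕ} (hm2 : 2 ≤ m) (hmq : m ≤ q - 1)
    (γ : Fq) (t : ℕ) (hγt : orderOf γ = t) (hγ0 : γ ≠ 0)
    (α : Fin m → Fq) (hα0 : ∀ j, α j ≠ 0) (hαinj : Function.Injective α)
    (β : Fq) (hβ : β ≠ 0)
    (k n : ℕ) (hk1 : 1 ≤ k) (hkq : k ≤ q - 1) (hn : 1 ≤ n) :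
    (jointNLC (fun (j : Fin m) (i : ℕ) => (α j * γ ^ i - β) ^ (q - 2)) k n : ℝ)
      ≥ min (min (((m : ℝ) * n - 2) / ((m : ℝ) + k + 1))
              (((deltaT γ t α : ℝ) * m - 2) / ((k : ℝ) + 1)))
          (t : ℝ) := by
  classical
  set Z : Fin m → ℕ → Fq := fun (j : Fin m) (i : ℕ) => (α j * γ ^ i - β) ^ (q - 2) with hZ
  -- Z is not identically zero on the window
  have hnz : ¬ ∀ j : Fin m, ∀ i : ℕ, i < n → Z j i = 0 := by
    intro hall
    have h01 : (⟨0, by omega⟩ : Fin m) ≠ (⟨1, by omega⟩ : Fin m) := by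
      intro h; simpa using congrArg Fin.val h
    have hαne : α ⟨0, by omega⟩ ≠ α ⟨1, by omega⟩ := fun h => h01 (hαinj h)
    obtain ⟨j, hj⟩ : ∃ j : Fin m, α j ≠ β := by
      by_contra hcon
      push_neg at hcon
      exact hαne ((hcon _).trans (hcon _).symm)
    have h1 := hall j 0 (by omega)
    rw [hZ] at h1
    simp only [pow_zero, mul_one] at h1
    exact pow_ne_zero (q - 2) (sub_ne_zero.2 hj) h1
  have hSne : SatisfiesNLRecursion Z k n n := by
    refine ⟨0, fun s => by simp, fun j i hi => absurd hi (by omega)⟩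
  have hnonempty : {c : ℕ | SatisfiesNLRecursion Z k n c}.Nonempty :=
    ⟨n, show SatisfiesNLRecursion Z k n n from hSne⟩
  have hjnlc : jointNLC Z k n = sInf {c : ℕ | SatisfiesNLRecursion Z k n c} := by
    rw [jointNLC, if_neg hnz]
  have hNmem : SatisfiesNLRecursion Z k n (jointNLC Z k n) := by
    rw [hjnlc]
    exact Nat.sInf_mem hnonempty
  set N := jointNLC Z k n with hN
  rw [ge_iff_le]
  by_contra hcon
  push_neg at hcon
  rw [lt_min_iff, lt_min_iff] at hcon
  obtain ⟨⟨hA, hB⟩, hT⟩ := hcon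
  set δ := deltaT γ t α with hδ
  have h3 : N < t := by exact_mod_cast hT
  have hmk1 : (0 : ℝ) < (m : ℝ) + k + 1 := by positivity
  have hk1' : (0 : ℝ) < (k : ℝ) + 1 := by positivity
  rw [lt_div_iff₀ hmk1] at hA
  rw [lt_div_iff₀ hk1'] at hB
  have h1 : N * (m + k + 1) + 3 ≤ m * n := by
    have : ((N * (m + k + 1) + 2 : ℕ) : ℝ) < ((m * n : ℕ) : ℝ) := by
      push_cast
      nlinarith [hA]
    have := Nat.cast_lt.1 this
    omega
  have h2 : N * (k + 1) + 3 ≤ m * δ := by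
    have : ((N * (k + 1) + 2 : ℕ) : ℝ) < ((m * δ : ℕ) : ℝ) := by
      push_cast
      nlinarith [hB]
    have := Nat.cast_lt.1 this
    omega
  exact key_aux q hq hq3 hm2 γ t hγt hγ0 α hα0 β hβ k n N h1 h2 h3 hNmem
end
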